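/- Let n ≥ 1, let a ∈ ℂ^n with a·a = 1, let B_{n,2} = 2(n+2)/(3(n+1)), and set f = (1/B_{n,2})·q_n^2 − (a·x)^4. Then the kernel of the middle catalecticant map Cat_{f,2} is the one-dimensional space spanned by (n+2)·(a·Y)^2 − q_n(Y), where a·Y = a_1Y_1+⋯+a_nY_n and q_n(Y) = Y_1^2+⋯+Y_n^2. -/

import Mathlib

open MvPolynomial

noncomputable def qpoly (n : ℕ) : MvPolynomial (Fin n) ℂ :=
  ∑ i : Fin n, X i ^ 2

noncomputable def linForm {n : ℕ} (a : Fin n → ℂ) : MvPolynomial (Fin n) ℂ :=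
  ∑ i : Fin n, C (a i) * X i

noncomputable def dotC {n : ℕ} (a b : Fin n → ℂ) : ℂ :=
  ∑ i : Fin n, a i * b i

noncomputable def diffOp {n : ℕ} (φ f : MvPolynomial (Fin n) ℂ) : MvPolynomial (Fin n) ℂ :=
  ∑ d ∈ φ.support, φ.coeff d •
    ((List.ofFn fun i : Fin n =>
        ((pderiv i).toLinearMap : MvPolynomial (Fin n) ℂ →ₗ[ℂ] MvPolynomial (Fin n) ℂ) ^ d i).prod f)

noncomputable def lap {n : ℕ} (f : MvPolynomial (Fin n) ℂ) : MvPolynomial (Fin n) ℂ :=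
  ∑ i : Fin n, pderiv i (pderiv i f)

section ListProd
variable {M : Type*} [Monoid M]

lemma aux_ofFn_prod_one : ∀ {m : ℕ} (v : Fin m → M), (∀ k, v k = 1) → (List.ofFn v).prod = 1 := by
  intro m v h
  apply List.prod_eq_one
  intro x hx
  rcases List.mem_ofFn.mp hx with ⟨k, rfl⟩
  exact h k

lemma aux_ofFn_prod_single : ∀ {m : ℕ} (v : Fin m → M) (i : Fin m) (x : M),
    v i = x → (∀ k, k ≠ i → v k = 1) → (List.ofFn v).prod = x := by
  intro m
  induction m with
  | zero => intro v i; exact i.elim0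
  | succ m ih =>
    intro v i x hx h1
    rw [List.ofFn_succ, List.prod_cons]
    rcases Fin.eq_zero_or_eq_succ i with rfl | ⟨i', rfl⟩
    · rw [hx, aux_ofFn_prod_one _ (fun k => h1 _ (Fin.succ_ne_zero k)), mul_one]
    · rw [h1 0 (Ne.symm (Fin.succ_ne_zero i')), one_mul]
      exact ih (fun k => v k.succ) i' x hx (fun k hk => h1 _ (fun h => hk (Fin.succ_injective _ h)))

lemma aux_ofFn_prod_pair : ∀ {m : ℕ} (v : Fin m → M) (i j : Fin m) (x y : M), i ≠ j →
    v i = x → v j = y → (∀ k, k ≠ i → k ≠ j → v k = 1) → Commute x y → (List.ofFn v).prod = x * y := by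
  intro m
  induction m with
  | zero => intro v i; exact i.elim0
  | succ m ih =>
    intro v i j x y hij hx hy h1 hc
    rw [List.ofFn_succ, List.prod_cons]
    rcases Fin.eq_zero_or_eq_succ i with rfl | ⟨i', rfl⟩
    · rcases Fin.eq_zero_or_eq_succ j with rfl | ⟨j', rfl⟩
      · exact absurd rfl hij
      · rw [hx]
        rw [aux_ofFn_prod_single (fun k => v k.succ) j' y hy
          (fun k hk => h1 _ (Fin.succ_ne_zero k) (fun h => hk (Fin.succ_injective _ h)))]
    · rcases Fin.eq_zero_or_eq_succ j with rfl | ⟨j', rfl⟩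
      · rw [hy, aux_ofFn_prod_single (fun k => v k.succ) i' x hx
          (fun k hk => h1 _ (fun h => hk (Fin.succ_injective _ h)) (Fin.succ_ne_zero k)), ← hc.eq]
      · rw [h1 0 (Ne.symm (Fin.succ_ne_zero i')) (Ne.symm (Fin.succ_ne_zero j')), one_mul]
        exact ih (fun k => v k.succ) i' j' x y (fun h => hij (by rw [h])) hx hy
          (fun k hk1 hk2 => h1 _ (fun h => hk1 (Fin.succ_injective _ h))
            (fun h => hk2 (Fin.succ_injective _ h))) hc
end ListProd

lemma pderiv_pderiv_comm {n : ℕ} (i j : Fin n) (p : MvPolynomial (Fin n) ℂ) :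
    pderiv i (pderiv j p) = pderiv j (pderiv i p) := by
  induction p using MvPolynomial.induction_on' with
  | add p q hp hq => simp [hp, hq]
  | monomial d c =>
    rw [pderiv_monomial, pderiv_monomial, pderiv_monomial, pderiv_monomial]
    rcases eq_or_ne i j with rfl | hij
    · rfl
    · have h1 : ((d - Finsupp.single j 1 : Fin _ →₀ ℕ) i) = d i := by
        simp [Finsupp.tsub_apply, Finsupp.single_apply, hij.symm]
      have h2 : ((d - Finsupp.single i 1 : Fin _ →₀ ℕ) j) = d j := by
        simp [Finsupp.tsub_apply, Finsupp.single_apply, hij]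
      rw [h1, h2, tsub_tsub, tsub_tsub, add_comm (Finsupp.single j 1)]
      ring_nf

variable {n : ℕ}

lemma diffOp_zero (f : MvPolynomial (Fin n) ℂ) : diffOp 0 f = 0 := by
  simp [diffOp]

lemma diffOp_add (p q f : MvPolynomial (Fin n) ℂ) :
    diffOp (p + q) f = diffOp p f + diffOp q f := by
  unfold diffOp
  rw [Finset.sum_subset (MvPolynomial.support_add (p := p) (q := q))
      (by intro d _ hd; rw [notMem_support_iff.mp hd, zero_smul]),
    Finset.sum_subset (Finset.subset_union_left (s₁ := p.support) (s₂ := q.support))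
      (by intro d _ hd; rw [notMem_support_iff.mp hd, zero_smul]),
    Finset.sum_subset (Finset.subset_union_right (s₁ := p.support) (s₂ := q.support))
      (by intro d _ hd; rw [notMem_support_iff.mp hd, zero_smul]),
    ← Finset.sum_add_distrib]
  exact Finset.sum_congr rfl fun d _ => by rw [coeff_add, add_smul]

lemma diffOp_sum {α : Type*} (s : Finset α) (ψ : α → MvPolynomial (Fin n) ℂ)
    (f : MvPolynomial (Fin n) ℂ) :
    diffOp (∑ x ∈ s, ψ x) f = ∑ x ∈ s, diffOp (ψ x) f := by
  induction s using Finset.cons_induction_on with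
  | empty => simp [diffOp_zero]
  | cons _ _ h ih => rw [Finset.sum_cons, Finset.sum_cons, diffOp_add, ih]

lemma diffOp_monomial (d : Fin n →₀ ℕ) (c : ℂ) (f : MvPolynomial (Fin n) ℂ) :
    diffOp (monomial d c) f = c •
    ((List.ofFn fun i : Fin n =>
        ((pderiv i).toLinearMap : MvPolynomial (Fin n) ℂ →ₗ[ℂ] MvPolynomial (Fin n) ℂ) ^ d i).prod f) := by
  rcases eq_or_ne c 0 with rfl | hc
  · simp [diffOp]
  · unfold diffOp
    rw [support_monomial, if_neg hc, Finset.sum_singleton, coeff_monomial, if_pos rfl]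

lemma Dop_pair (i j : Fin n) (g : MvPolynomial (Fin n) ℂ) :
    ((List.ofFn fun k : Fin n =>
        ((pderiv k).toLinearMap : MvPolynomial (Fin n) ℂ →ₗ[ℂ] MvPolynomial (Fin n) ℂ)
          ^ ((Finsupp.single i 1 + Finsupp.single j 1 : Fin n →₀ ℕ) k)).prod) g
      = pderiv i (pderiv j g) := by
  rcases eq_or_ne i j with rfl | hij
  · rw [aux_ofFn_prod_single _ i (((pderiv i).toLinearMap :
        MvPolynomial (Fin n) ℂ →ₗ[ℂ] MvPolynomial (Fin n) ℂ) ^ 2)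
      (by simp) (fun k hk => by simp [Finsupp.single_apply, (Ne.symm hk)])]
    rw [pow_two, Module.End.mul_apply]; rfl
  · rw [aux_ofFn_prod_pair _ i j ((pderiv i).toLinearMap :
        MvPolynomial (Fin n) ℂ →ₗ[ℂ] MvPolynomial (Fin n) ℂ)
      ((pderiv j).toLinearMap : MvPolynomial (Fin n) ℂ →ₗ[ℂ] MvPolynomial (Fin n) ℂ) hij
      (by simp [Finsupp.single_apply, hij, Ne.symm hij])
      (by simp [Finsupp.single_apply, hij, Ne.symm hij])
      (fun k hk1 hk2 => by simp [Finsupp.single_apply, Ne.symm hk1, Ne.symm hk2])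
      (LinearMap.ext fun p => by
        simp only [Module.End.mul_apply]
        exact pderiv_pderiv_comm i j p)]
    rw [Module.End.mul_apply]
    rfl

variable {n : ℕ}

lemma deg_one_classify (d : Fin n →₀ ℕ) (h : ∑ k, d k = 1) :
    ∃ i, d = Finsupp.single i 1 := by
  have hex : ∃ i, d i ≠ 0 := by
    by_contra hc
    push_neg at hc
    simp [hc] at h
  obtain ⟨i, hi⟩ := hex
  have hle : d i ≤ ∑ k, d k := Finset.single_le_sum (fun k _ => Nat.zero_le _) (Finset.mem_univ i)
  have hdi : d i = 1 := by omega
  have hrest : ∀ k, k ≠ i → d k = 0 := by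
    intro k hk
    have hsplit : ∑ k, d k = d i + ∑ k ∈ Finset.univ.erase i, d k :=
      (Finset.add_sum_erase _ _ (Finset.mem_univ i)).symm
    have : ∑ k ∈ Finset.univ.erase i, d k = 0 := by omega
    exact Finset.sum_eq_zero_iff.mp this k (Finset.mem_erase.mpr ⟨hk, Finset.mem_univ k⟩)
  refine ⟨i, Finsupp.ext fun k => ?_⟩
  rcases eq_or_ne k i with rfl | hk
  · simp [hdi]
  · simp [Finsupp.single_apply, Ne.symm hk, hrest k hk]

lemma deg_two_classify (d : Fin n →₀ ℕ) (h : ∑ k, d k = 2) :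
    ∃ i j, d = Finsupp.single i 1 + Finsupp.single j 1 := by
  have hex : ∃ i, d i ≠ 0 := by
    by_contra hc
    push_neg at hc
    simp [hc] at h
  obtain ⟨i, hi⟩ := hex
  set d' : Fin n →₀ ℕ := d - Finsupp.single i 1 with hd'
  have hsum : d = Finsupp.single i 1 + d' := by
    refine Finsupp.ext fun k => ?_
    rcases eq_or_ne k i with hk | hk
    · rw [hk]
      have h1 : (Finsupp.single i 1 : Fin n →₀ ℕ) i = 1 := by simp
      simp only [Finsupp.add_apply, hd', Finsupp.tsub_apply, h1]
      omega
    · simp [hd', Finsupp.single_apply, Ne.symm hk]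
  have hs1 : ∑ k, d' k = 1 := by
    have h2 : ∑ k, d k = (∑ k, (Finsupp.single i 1 : Fin n →₀ ℕ) k) + ∑ k, d' k := by
      rw [← Finset.sum_add_distrib]
      exact Finset.sum_congr rfl fun k _ => by rw [hsum]; rfl
    have h3 : ∑ k, (Finsupp.single i 1 : Fin n →₀ ℕ) k = 1 := by
      simp [Finsupp.single_apply]
    omega
  obtain ⟨j, hj⟩ := deg_one_classify d' hs1
  exact ⟨i, j, by rw [hsum, hj]⟩

variable {n : ℕ} {a : Fin n → ℂ}

lemma monomial_pair (i j : Fin n) (c : ℂ) :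
    (monomial (Finsupp.single i 1 + Finsupp.single j 1) c : MvPolynomial (Fin n) ℂ)
      = C c * X i * X j := by
  rw [C_apply, X, X, monomial_mul, monomial_mul]
  simp

lemma pderiv_qpoly (j : Fin n) : pderiv j (qpoly n) = C 2 * X j := by
  rw [qpoly, map_sum, Finset.sum_eq_single j]
  · rw [pderiv_pow, pderiv_X_self]
    simp [map_ofNat]
  · intro i _ hij
    rw [pderiv_pow, pderiv_X_of_ne hij]
    ring
  · simp

lemma pderiv_linForm (j : Fin n) : pderiv j (linForm a) = C (a j) := by
  rw [linForm, map_sum, Finset.sum_eq_single j]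
  · rw [pderiv_C_mul, pderiv_X_self, mul_one]
  · intro i _ hij
    rw [pderiv_C_mul, pderiv_X_of_ne hij, mul_zero]
  · simp

lemma pd_pair (k i j : Fin n) (c : ℂ) :
    pderiv k (C c * X i * X j)
      = C c * ((if k = i then 1 else 0) * X j + X i * (if k = j then 1 else 0)) := by
  rw [pderiv_mul, pderiv_mul, pderiv_C, pderiv_X, pderiv_X]
  simp only [Pi.single_apply, eq_comm]
  split_ifs <;> ring

lemma pd2_pair (k i j : Fin n) (c : ℂ) :
    pderiv k (pderiv k (C c * X i * X j))
      = C (2 * c) * ((if k = i then 1 else 0) * (if k = j then 1 else 0)) := by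
  rw [pd_pair]
  split_ifs with h1 h2 h2
  · subst h1; subst h2
    simp [pderiv_C_mul, pderiv_X_self, map_mul, map_ofNat]
    ring
  · subst h1
    simp [pderiv_C_mul, pderiv_X_of_ne (Ne.symm h2)]
  · subst h2
    simp [pderiv_C_mul, pderiv_X_of_ne (Ne.symm h1)]
  · simp

lemma lap_pair (i j : Fin n) (c : ℂ) :
    lap (C c * X i * X j) = C (if i = j then 2 * c else 0) := by
  unfold lap
  rw [Finset.sum_congr rfl fun k _ => pd2_pair k i j c, ← Finset.mul_sum]
  have h1 : ∀ k : Fin n, ((if k = i then (1:MvPolynomial (Fin n) ℂ) else 0)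
      * (if k = j then 1 else 0)) = if k = i then (if k = j then 1 else 0) else 0 := by
    intro k; split_ifs <;> ring
  rw [Finset.sum_congr rfl fun k _ => h1 k]
  rw [Finset.sum_ite_eq' Finset.univ i (fun k => if k = j then (1:MvPolynomial (Fin n) ℂ) else 0)]
  simp only [Finset.mem_univ, if_true]
  split_ifs <;> simp

lemma eval_pair (i j : Fin n) (c : ℂ) :
    eval a (C c * X i * X j) = c * a i * a j := by simp

lemma lap_qpoly : lap (qpoly n) = C (2 * (n : ℂ)) := by
  unfold lap
  have h : ∀ k : Fin n, pderiv k (pderiv k (qpoly n)) = C 2 := by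
    intro k
    rw [pderiv_qpoly, pderiv_C_mul, pderiv_X_self, mul_one]
  rw [Finset.sum_congr rfl fun k _ => h k]
  simp [map_mul, mul_comm]

lemma lap_linForm_sq (ha : ∑ i, a i * a i = 1) : lap (linForm a ^ 2) = C 2 := by
  unfold lap
  have h : ∀ k : Fin n, pderiv k (pderiv k (linForm a ^ 2)) = C (2 * (a k * a k)) := by
    intro k
    have h1 : pderiv k (linForm a ^ 2) = C (2 * a k) * linForm a := by
      rw [pderiv_pow, pderiv_linForm]
      simp [map_mul, map_ofNat]
      ring
    rw [h1, pderiv_C_mul, pderiv_linForm, ← map_mul]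
    ring_nf
  rw [Finset.sum_congr rfl fun k _ => h k, ← map_sum, ← Finset.mul_sum, ha, mul_one]

lemma eval_qpoly (ha : ∑ i, a i * a i = 1) : eval a (qpoly n) = 1 := by
  rw [qpoly]
  simp only [map_sum, map_pow, eval_X]
  rw [← ha]
  exact Finset.sum_congr rfl fun i _ => sq (a i)

lemma eval_linForm (ha : ∑ i, a i * a i = 1) : eval a (linForm a) = 1 := by
  rw [linForm]
  simp only [map_sum, map_mul, eval_C, eval_X]
  exact ha

lemma lap_add (p q : MvPolynomial (Fin n) ℂ) : lap (p + q) = lap p + lap q := by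
  simp [lap, Finset.sum_add_distrib]

lemma lap_zero : lap (0 : MvPolynomial (Fin n) ℂ) = 0 := by simp [lap]

lemma pd2_f (β : ℂ) (i j : Fin n) :
    pderiv i (pderiv j (C β * qpoly n ^ 2 - linForm a ^ 4))
      = C β * (C (if i = j then (4:ℂ) else 0) * qpoly n + 8 * X i * X j)
        - 12 * C (a i) * C (a j) * linForm a ^ 2 := by
  have h1 : pderiv j (C β * qpoly n ^ 2 - linForm a ^ 4)
      = C β * (C 4 * (X j * qpoly n)) - C 4 * (C (a j) * linForm a ^ 3) := by
    rw [map_sub, pderiv_C_mul, pderiv_pow, pderiv_pow, pderiv_qpoly, pderiv_linForm]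
    simp only [map_ofNat]
    push_cast
    ring
  rw [h1, map_sub, pderiv_C_mul, pderiv_C_mul, pderiv_C_mul, pderiv_mul, pderiv_mul,
    pderiv_pow, pderiv_qpoly, pderiv_linForm, pderiv_X]
  simp only [Pi.single_apply, pderiv_C]
  rcases eq_or_ne i j with rfl | hij
  · simp only [if_pos rfl, map_ofNat]
    push_cast
    ring_nf
    simp only [map_ofNat]
    try ring
  · rw [if_neg (Ne.symm hij), if_neg hij]
    simp only [map_zero, map_ofNat]
    push_cast
    ring

lemma master {n : ℕ} (a : Fin n → ℂ) (β : ℂ) (s : Finset (Fin n →₀ ℕ))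
    (hs : ∀ d ∈ s, ∑ k, d k = 2) (co : (Fin n →₀ ℕ) → ℂ) :
    diffOp (∑ d ∈ s, monomial d (co d)) (C β * qpoly n ^ 2 - linForm a ^ 4)
      = C β * (C (2 * coeff 0 (lap (∑ d ∈ s, monomial d (co d)))) * qpoly n
          + 8 * (∑ d ∈ s, monomial d (co d)))
        - 12 * C (eval a (∑ d ∈ s, monomial d (co d))) * linForm a ^ 2 := by
  induction s using Finset.cons_induction_on with
  | empty =>
    simp only [Finset.sum_empty, diffOp_zero, lap_zero, map_zero, coeff_zero, mul_zero, map_mul]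
    ring
  | cons d s hd ih =>
    have hsd : ∀ d' ∈ s, ∑ k, d' k = 2 := fun d' h => hs d' (Finset.mem_cons_of_mem h)
    rw [Finset.sum_cons, diffOp_add, ih hsd, lap_add, coeff_add, map_add]
    -- remains to handle the single monomial term
    obtain ⟨i, j, hij⟩ := deg_two_classify d (hs d (Finset.mem_cons_self d s))
    have hmono : diffOp (monomial d (co d)) (C β * qpoly n ^ 2 - linForm a ^ 4)
        = C β * (C (2 * coeff 0 (lap (monomial d (co d)))) * qpoly n + 8 * monomial d (co d))
          - 12 * C (eval a (monomial d (co d))) * linForm a ^ 2 := by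
      rw [hij, diffOp_monomial, Dop_pair, pd2_f, monomial_pair, lap_pair, eval_pair,
        coeff_zero_C, smul_eq_C_mul]
      rcases eq_or_ne i j with rfl | hij'
      · simp only [if_pos rfl, eq_self_iff_true, if_true, map_mul, map_ofNat]
        ring
      · simp only [if_neg hij', map_mul, map_ofNat, map_zero]
        ring
    rw [hmono]
    simp only [map_mul, map_add]
    ring

lemma master' {n : ℕ} (a : Fin n → ℂ) (β : ℂ) (φ : MvPolynomial (Fin n) ℂ)
    (hφ : φ.IsHomogeneous 2) :
    diffOp φ (C β * qpoly n ^ 2 - linForm a ^ 4)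
      = C β * (C (2 * coeff 0 (lap φ)) * qpoly n + 8 * φ)
        - 12 * C (eval a φ) * linForm a ^ 2 := by
  have hdeg : ∀ d ∈ φ.support, ∑ k, d k = 2 := by
    intro d hd
    have h1 : Finsupp.degree d = ∑ k, d k :=
      Finset.sum_subset (Finset.subset_univ _) fun k _ hk => Finsupp.notMem_support_iff.mp hk
    by_contra hne
    exact mem_support_iff.mp hd (hφ.coeff_eq_zero (by rw [h1]; exact hne))
  have := master a β φ.support hdeg (fun d => coeff d φ)
  rwa [support_sum_monomial_coeff] at this

lemma lap_C_mul {n : ℕ} (z : ℂ) (g : MvPolynomial (Fin n) ℂ) :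
    lap (C z * g) = C z * lap g := by
  simp [lap, pderiv_C_mul, Finset.mul_sum]

lemma lap_sub {n : ℕ} (p q : MvPolynomial (Fin n) ℂ) : lap (p - q) = lap p - lap q := by
  simp [lap, Finset.sum_sub_distrib]

lemma hom_linForm {n : ℕ} (a : Fin n → ℂ) : (linForm a).IsHomogeneous 1 := by
  unfold linForm
  exact IsHomogeneous.sum _ _ _ fun i _ => isHomogeneous_C_mul_X _ _

lemma hom_qpoly {n : ℕ} : (qpoly n).IsHomogeneous 2 := by
  unfold qpoly
  exact IsHomogeneous.sum _ _ _ fun i _ => isHomogeneous_X_pow i 2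

/-- For a·a = 1 and f = (1/B_{n,2})·q_n^2 − (a·x)^4 with
B_{n,2} = 2(n+2)/(3(n+1)), the kernel of Cat_{f,2} is spanned by (n+2)(a·Y)² − q_n(Y). -/
theorem kernel_middle_catalecticant_s2 (n : ℕ) (hn : 1 ≤ n)
    (a : Fin n → ℂ) (ha : dotC a a = 1) (f : MvPolynomial (Fin n) ℂ)
    (hf : f = C ((2 * ((n : ℂ) + 2) / (3 * ((n : ℂ) + 1)))⁻¹) * qpoly n ^ 2 - linForm a ^ 4) :
    ∀ φ : MvPolynomial (Fin n) ℂ,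
      (φ.IsHomogeneous 2 ∧ diffOp φ f = 0) ↔
        ∃ c : ℂ, φ = c • (C ((n : ℂ) + 2) * linForm a ^ 2 - qpoly n) := by
  have ha' : ∑ i, a i * a i = 1 := ha
  subst hf
  intro φ
  set β : ℂ := (2 * ((n : ℂ) + 2) / (3 * ((n : ℂ) + 1)))⁻¹ with hβdef
  have hn1 : ((n:ℂ) + 1) ≠ 0 := Nat.cast_add_one_ne_zero n
  have hn2 : ((n:ℂ) + 2) ≠ 0 := by
    have h : ((n + 2 : ℕ) : ℂ) ≠ 0 := Nat.cast_ne_zero.mpr (by omega)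
    push_cast at h
    exact h
  have hβ : β ≠ 0 := inv_ne_zero (div_ne_zero (mul_ne_zero two_ne_zero hn2)
    (mul_ne_zero three_ne_zero hn1))
  have hkey : β * (8*((n:ℂ)+2)) = 12*((n:ℂ)+1) := by rw [hβdef]; field_simp; ring
  clear_value β
  clear hβdef
  constructor
  · rintro ⟨hhom, hker⟩
    have hm := master' a β φ hhom
    rw [hker] at hm
    set u := coeff 0 (lap φ) with hu
    set s := eval a φ with hsdef
    have hCne : (C ((8:ℂ)*β) : MvPolynomial (Fin n) ℂ) ≠ 0 := by
      rw [Ne, C_eq_zero]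
      exact mul_ne_zero (by norm_num) hβ
    have h1 : (8:ℂ)*β*(12*s/(8*β)) = 12*s := by field_simp
    have h2 : (8:ℂ)*β*(u/4) = 2*u*β := by ring
    have hφform : φ = C (12*s/(8*β)) * linForm a ^ 2 - C (u/4) * qpoly n := by
      apply mul_left_cancel₀ hCne
      have h1' := congrArg (fun z : ℂ => (C z : MvPolynomial (Fin n) ℂ)) h1
      have h2' := congrArg (fun z : ℂ => (C z : MvPolynomial (Fin n) ℂ)) h2
      simp only [map_mul, map_ofNat] at h1' h2' hm ⊢
      linear_combination (-1 : MvPolynomial (Fin n) ℂ) * hm - linForm a ^ 2 * h1' + qpoly n * h2'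
    have hlap : lap φ = C (12*s/(8*β)) * C 2 - C (u/4) * C (2*(n:ℂ)) := by
      rw [hφform, lap_sub, lap_C_mul, lap_C_mul, lap_linForm_sq ha', lap_qpoly]
    have huq : u = (12*s/(8*β))*2 - (u/4)*(2*(n:ℂ)) := by
      have h3 := congrArg (coeff 0) hlap
      rwa [← map_mul, ← map_mul, ← map_sub, coeff_zero_C] at h3
    have hu6 : u * (β*((n:ℂ)+2)) = 6*s := by
      field_simp at huq
      linear_combination huq / 16
    refine ⟨3*s/(2*β*((n:ℂ)+2)), ?_⟩
    rw [smul_eq_C_mul, hφform]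
    have e1 : 12*s/(8*β) = (3*s/(2*β*((n:ℂ)+2)))*((n:ℂ)+2) := by field_simp; ring
    have e2 : u/4 = 3*s/(2*β*((n:ℂ)+2)) := by
      rw [div_eq_div_iff (by norm_num) (mul_ne_zero (mul_ne_zero two_ne_zero hβ) hn2)]
      linear_combination 2 * hu6
    rw [e1, e2, map_mul]
    ring
  · rintro ⟨c, rfl⟩
    have hhom : (c • (C ((n:ℂ)+2) * linForm a ^ 2 - qpoly n)).IsHomogeneous 2 := by
      rw [smul_eq_C_mul]
      apply IsHomogeneous.C_mul
      apply IsHomogeneous.sub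
      · exact IsHomogeneous.C_mul (by simpa using (hom_linForm a).pow 2) _
      · exact hom_qpoly
    refine ⟨hhom, ?_⟩
    rw [master' a β _ hhom]
    have hu' : coeff 0 (lap (c • (C ((n:ℂ)+2) * linForm a ^ 2 - qpoly n)))
        = c*(((n:ℂ)+2)*2 - 2*(n:ℂ)) := by
      rw [smul_eq_C_mul, lap_C_mul, lap_sub, lap_C_mul, lap_linForm_sq ha', lap_qpoly,
        ← map_mul, ← map_sub, ← map_mul, coeff_zero_C]
    have hs' : eval a (c • (C ((n:ℂ)+2) * linForm a ^ 2 - qpoly n)) = c*(((n:ℂ)+2) - 1) := by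
      rw [smul_eq_C_mul]
      simp only [map_mul, map_sub, eval_C, map_pow, eval_linForm ha', eval_qpoly ha',
        one_pow, mul_one]
    rw [hu', hs', smul_eq_C_mul]
    have hkeyC := congrArg (fun z : ℂ => (C z : MvPolynomial (Fin n) ℂ)) hkey
    simp only [map_mul, map_ofNat, map_add, map_one, map_sub, map_natCast] at hkeyC ⊢
    linear_combination (C c * linForm a ^ 2) * hkeyC
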